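/- Let K ⊆ ℍ^A and f : ℍ^A → ℍ^A, and suppose there is c₀ < 1 such that γ_A(f(g), f(h)) ≤ c₀ γ_A(g,h) for all g, h ∈ K, and suppose γ_A is bounded on K × K by some R (e.g. K compact). Then there is c₁ < 1 such that dist(f(g), f(h)) ≤ c₁ dist(g,h) for all g, h ∈ K, where dist(g,h) = cosh⁻¹(γ_A(g,h)/2 + 1). -/

import Mathlib

open Complex

/-- Inverse hyperbolic cosine: `cosh⁻¹(x) = log (x + √(x² - 1))` for `x ≥ 1`. -/
noncomputable def arcosh (x : ℝ) : ℝ := Real.log (x + Real.sqrt (x^2 - 1))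

/-- `γ(a,b) = |a-b|² / (Im a · Im b)` on the upper half-plane. -/
noncomputable def gam (a b : ℂ) : ℝ := ‖a - b‖^2 / (a.im * b.im)

/-- `γ_A(g,h) = max_j γ(g_j,h_j)`. -/
noncomputable def gamA {A : Type*} [Fintype A] [Nonempty A] (g h : A → ℂ) : ℝ :=
  Finset.univ.sup' Finset.univ_nonempty (fun j => gam (g j) (h j))

lemma gamA_nonneg {A : Type*} [Fintype A] [Nonempty A] (g h : A → ℂ)
    (hg : ∀ j, 0 < (g j).im) (hh : ∀ j, 0 < (h j).im) : 0 ≤ gamA g h := by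
  obtain ⟨j⟩ := ‹Nonempty A›
  refine le_trans ?_ (Finset.le_sup' (fun j => gam (g j) (h j)) (Finset.mem_univ j))
  exact div_nonneg (sq_nonneg _) (mul_pos (hg j) (hh j)).le

/-- Concavity consequence: `1 + (u/U) * ((1+U)^c - 1) ≤ (1+u)^c`. -/
lemma rpow_concave_lower (c : ℝ) (hc0 : 0 ≤ c) (hc1 : c ≤ 1) (U u : ℝ)
    (hU : 0 < U) (hu0 : 0 ≤ u) (huU : u ≤ U) :
    1 + (u/U) * ((1+U) ^ c - 1) ≤ (1+u) ^ c := by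
  have hconc := Real.concaveOn_rpow hc0 hc1
  have hl0 : 0 ≤ u / U := div_nonneg hu0 hU.le
  have hl1 : u / U ≤ 1 := div_le_one_of_le₀ huU hU.le
  have h := hconc.2 (Set.mem_Ici.2 (by norm_num : (0:ℝ) ≤ 1))
    (Set.mem_Ici.2 (by linarith : (0:ℝ) ≤ 1 + U))
    (by linarith : (0:ℝ) ≤ 1 - u/U) hl0 (by ring)
  simp only [smul_eq_mul] at h
  have harg : (1 - u/U) * 1 + u/U * (1+U) = 1 + u := by
    field_simp; ring
  rw [harg] at h
  have h1 : (1:ℝ) ^ c = 1 := Real.one_rpow c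
  rw [h1] at h
  nlinarith [h]

/-- If `f` contracts `γ_A` on `K` by a factor `c₀ < 1` and `γ_A` is bounded on `K × K`,
then `f` contracts the metric `dist(g,h) = cosh⁻¹(γ_A(g,h)/2 + 1)` on `K` by some
factor `c₁ < 1`. -/
theorem contraction_gamA_to_dist {A : Type*} [Fintype A] [Nonempty A]
    (K : Set (A → ℂ)) (hK : ∀ g ∈ K, ∀ j, 0 < (g j).im)
    (f : (A → ℂ) → (A → ℂ)) (hf : ∀ g ∈ K, ∀ j, 0 < (f g j).im)
    (c₀ : ℝ) (hc₀0 : 0 ≤ c₀) (hc₀ : c₀ < 1)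
    (hcontr : ∀ g ∈ K, ∀ h ∈ K, gamA (f g) (f h) ≤ c₀ * gamA g h)
    (R : ℝ) (hbdd : ∀ g ∈ K, ∀ h ∈ K, gamA g h ≤ R) :
    ∃ c₁ : ℝ, c₁ < 1 ∧ ∀ g ∈ K, ∀ h ∈ K,
      arcosh (gamA (f g) (f h) / 2 + 1) ≤ c₁ * arcosh (gamA g h / 2 + 1) := by
  set a : ℝ := Real.sqrt c₀ with ha
  have ha0 : 0 ≤ a := Real.sqrt_nonneg _
  have ha1 : a < 1 := by
    rw [ha, show (1:ℝ) = Real.sqrt 1 by simp]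
    exact Real.sqrt_lt_sqrt hc₀0 hc₀
  have haa : a * a = c₀ := Real.mul_self_sqrt hc₀0
  set T : ℝ := R / 2 with hT
  set U : ℝ := max (T + Real.sqrt (T^2 + 2*T)) 1 with hU
  have hU1 : (1:ℝ) ≤ U := le_max_right _ _
  have hUpos : (0:ℝ) < U := by linarith
  have hlogU : 0 < Real.log (1 + U) := Real.log_pos (by linarith)
  set c₁ : ℝ := Real.log (1 + a * U) / Real.log (1 + U) with hc₁
  have haU : 0 ≤ a * U := mul_nonneg ha0 hUpos.le
  have haU' : a * U < U := by
    calc a * U < 1 * U := by exact mul_lt_mul_of_pos_right ha1 hUpos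
      _ = U := one_mul U
  have hc₁0 : 0 ≤ c₁ := div_nonneg (Real.log_nonneg (by linarith)) hlogU.le
  have hc₁1 : c₁ < 1 := by
    rw [hc₁, div_lt_one hlogU]
    exact Real.log_lt_log (by linarith) (by linarith)
  refine ⟨c₁, hc₁1, fun g hg h hh => ?_⟩
  set γ := gamA g h with hγ
  set γ' := gamA (f g) (f h) with hγ'
  have hγ0 : 0 ≤ γ := gamA_nonneg g h (hK g hg) (hK h hh)
  have hγ'0 : 0 ≤ γ' := gamA_nonneg _ _ (hf g hg) (hf h hh)
  have hγR : γ ≤ R := hbdd g hg h hh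
  have hγ'c : γ' ≤ c₀ * γ := hcontr g hg h hh
  set t : ℝ := γ / 2 with ht
  have ht0 : 0 ≤ t := by positivity
  have htT : t ≤ T := by rw [ht, hT]; linarith
  have hT0 : 0 ≤ T := le_trans ht0 htT
  set u : ℝ := t + Real.sqrt (t^2 + 2*t) with hu
  have hsq0 : 0 ≤ Real.sqrt (t^2 + 2*t) := Real.sqrt_nonneg _
  have hu0 : 0 ≤ u := by positivity
  have huU : u ≤ U := by
    refine le_trans ?_ (le_max_left _ _)
    have : Real.sqrt (t^2 + 2*t) ≤ Real.sqrt (T^2 + 2*T) :=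
      Real.sqrt_le_sqrt (by nlinarith)
    linarith
  -- arcosh (γ/2 + 1) = log (1 + u)
  have harc_eq : arcosh (γ/2 + 1) = Real.log (1 + u) := by
    rw [arcosh]
    congr 1
    rw [hu, ← ht]
    have : (t + 1)^2 - 1 = t^2 + 2*t := by ring
    rw [show γ/2 + 1 = t + 1 from rfl, this]
    ring
  -- arcosh (γ'/2 + 1) ≤ log (1 + a * u)
  have hstep1 : arcosh (γ'/2 + 1) ≤ Real.log (1 + a * u) := by
    rw [arcosh]
    have hc₀a : c₀ ≤ a := by
      rw [← haa]; exact mul_le_of_le_one_left ha0 ha1.le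
    have h1' : γ'/2 ≤ c₀ * t := by rw [ht]; linarith
    have h1 : γ'/2 ≤ a * t := le_trans h1' (mul_le_mul_of_nonneg_right hc₀a ht0)
    have h2 : Real.sqrt ((γ'/2 + 1)^2 - 1) ≤ a * Real.sqrt (t^2 + 2*t) := by
      have e1 : (γ'/2)^2 ≤ (a*t)^2 := by
        have h0 : 0 ≤ γ'/2 := by positivity
        exact pow_le_pow_left₀ h0 h1 2
      have e2 : γ' ≤ 2*(c₀*t) := by rw [ht]; linarith
      have : (γ'/2 + 1)^2 - 1 ≤ (a*a) * (t^2 + 2*t) := by nlinarith [e1, e2, haa]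
      calc Real.sqrt ((γ'/2 + 1)^2 - 1) ≤ Real.sqrt ((a*a) * (t^2 + 2*t)) :=
            Real.sqrt_le_sqrt this
        _ = a * Real.sqrt (t^2 + 2*t) := by
            rw [Real.sqrt_mul (by positivity), Real.sqrt_mul_self ha0]
    have harg : γ'/2 + 1 + Real.sqrt ((γ'/2 + 1)^2 - 1) ≤ 1 + a * u := by
      rw [hu, mul_add]; linarith [h1, h2]
    refine Real.log_le_log ?_ harg
    have : 0 ≤ Real.sqrt ((γ'/2+1)^2 - 1) := Real.sqrt_nonneg _
    linarith
  -- log (1 + a*u) ≤ c₁ * log (1 + u)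
  have hstep2 : Real.log (1 + a * u) ≤ c₁ * Real.log (1 + u) := by
    have hpowU : (1 + U) ^ c₁ = 1 + a * U := by
      rw [hc₁, Real.rpow_def_of_pos (by linarith), mul_comm, div_mul_cancel₀ _ hlogU.ne',
        Real.exp_log (by linarith)]
    have hkey : 1 + a * u ≤ (1 + u) ^ c₁ := by
      have := rpow_concave_lower c₁ hc₁0 hc₁1.le U u hUpos hu0 huU
      rw [hpowU] at this
      have harith : 1 + u/U * (1 + a * U - 1) = 1 + a * u := by
        field_simp; ring
      rw [harith] at this
      exact this
    calc Real.log (1 + a * u) ≤ Real.log ((1 + u) ^ c₁) :=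
          Real.log_le_log (by linarith [mul_nonneg ha0 hu0]) hkey
      _ = c₁ * Real.log (1 + u) := Real.log_rpow (by linarith) c₁
  rw [harc_eq]
  exact le_trans hstep1 hstep2
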